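/- arXiv:2003.07222 — 2 statements merged into one kernel-verified Lean document; each statement's English description precedes it below -/
import Mathlib

section
/- Let X be an abstract state space, P a bounded projection on X, and T, S Markov operators on X such that SP = PS. Then δ_P(T ∘ S) ≤ δ_P(T) · δ_P(S). -/
open Filter Topology

/-- The generalized Dobrushin ergodicity coefficient of `T` with respect to `P`:
`δ_P(T) = sup {‖T x‖ : P x = 0, ‖x‖ ≤ 1}`. -/
noncomputable def dobrushinCoeff {X : Type*} [NormedAddCommGroup X] [NormedSpace ℝ X]
    (P T : X →L[ℝ] X) : ℝ :=
  sSup {r : ℝ | ∃ x : X, P x = 0 ∧ ‖x‖ ≤ 1 ∧ r = ‖T x‖}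

theorem stmt17 {X : Type*} [NormedAddCommGroup X] [NormedSpace ℝ X] [CompleteSpace X]
    (C : Set X) (f : X →L[ℝ] ℝ)
    (hC_closed : IsClosed C)
    (hC_add : ∀ x ∈ C, ∀ y ∈ C, x + y ∈ C)
    (hC_smul : ∀ r : ℝ, 0 ≤ r → ∀ x ∈ C, r • x ∈ C)
    (hC_pointed : ∀ x ∈ C, -x ∈ C → x = 0)
    (hf_pos : ∀ x ∈ C, x ≠ 0 → 0 < f x)
    (hnorm : ∀ x : X, ‖x‖ = sInf {r : ℝ | ∃ y ∈ C, ∃ z ∈ C, x = y - z ∧ r = f y + f z})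
    (T S P : X →L[ℝ] X)
    (hT_pos : ∀ x ∈ C, T x ∈ C) (hT_f : ∀ x, f (T x) = f x)
    (hS_pos : ∀ x ∈ C, S x ∈ C) (hS_f : ∀ x, f (S x) = f x)
    (hP_proj : P.comp P = P)
    (hSP : S.comp P = P.comp S) :
    dobrushinCoeff P (T.comp S) ≤ dobrushinCoeff P T * dobrushinCoeff P S := by
  have hbdd : ∀ Q : X →L[ℝ] X,
      BddAbove {r : ℝ | ∃ x : X, P x = 0 ∧ ‖x‖ ≤ 1 ∧ r = ‖Q x‖} := by
    intro Q
    refine ⟨‖Q‖, ?_⟩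
    rintro r ⟨x, -, hx, rfl⟩
    calc ‖Q x‖ ≤ ‖Q‖ * ‖x‖ := Q.le_opNorm x
      _ ≤ ‖Q‖ * 1 := mul_le_mul_of_nonneg_left hx (norm_nonneg Q)
      _ = ‖Q‖ := mul_one _
  have hmem0 : ∀ Q : X →L[ℝ] X,
      (0 : ℝ) ∈ {r : ℝ | ∃ x : X, P x = 0 ∧ ‖x‖ ≤ 1 ∧ r = ‖Q x‖} := by
    intro Q; exact ⟨0, by simp⟩
  have hδT0 : 0 ≤ dobrushinCoeff P T := le_csSup (hbdd T) (hmem0 T)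
  have hδS0 : 0 ≤ dobrushinCoeff P S := le_csSup (hbdd S) (hmem0 S)
  have key : ∀ x : X, P x = 0 → ‖x‖ ≤ 1 →
      ‖T (S x)‖ ≤ dobrushinCoeff P T * dobrushinCoeff P S := by
    intro x hPx hx
    have hPSx : P (S x) = 0 := by
      have := congrArg (fun Q : X →L[ℝ] X => Q x) hSP
      simp only [ContinuousLinearMap.comp_apply] at this
      rw [← this, hPx, map_zero]
    have hSle : ‖S x‖ ≤ dobrushinCoeff P S :=
      le_csSup (hbdd S) ⟨x, hPx, hx, rfl⟩
    by_cases hSx : S x = 0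
    · simp [hSx, mul_nonneg hδT0 hδS0]
    · have hn : (0 : ℝ) < ‖S x‖ := norm_pos_iff.mpr hSx
      set y : X := ‖S x‖⁻¹ • S x with hy
      have hPy : P y = 0 := by simp [hy, hPSx]
      have hyn : ‖y‖ ≤ 1 := by
        rw [hy, norm_smul, norm_inv, norm_norm, inv_mul_cancel₀ hn.ne']
      have hTy : ‖T y‖ ≤ dobrushinCoeff P T :=
        le_csSup (hbdd T) ⟨y, hPy, hyn, rfl⟩
      have hTSx : ‖T (S x)‖ = ‖S x‖ * ‖T y‖ := by
        rw [hy, map_smul, norm_smul, norm_inv, norm_norm, ← mul_assoc,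
          mul_inv_cancel₀ hn.ne', one_mul]
      rw [hTSx, mul_comm (dobrushinCoeff P T)]
      exact mul_le_mul hSle hTy (norm_nonneg _) hδS0
  refine csSup_le ⟨0, hmem0 _⟩ ?_
  rintro r ⟨x, hPx, hx, rfl⟩
  simpa using key x hPx hx
end

section
/- Let X be a strong abstract state space, P a Markov projection on X, and T a Markov operator on X. Then δ_P(T) = (1/2) · sup{‖Tu − Tv‖ : u, v ∈ K, P(u − v) = 0}. -/
open Filter Topology

theorem stmt18 {X : Type*} [NormedAddCommGroup X] [NormedSpace ℝ X] [CompleteSpace X]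
    (C : Set X) (f : X →L[ℝ] ℝ)
    (hC_closed : IsClosed C)
    (hC_add : ∀ x ∈ C, ∀ y ∈ C, x + y ∈ C)
    (hC_smul : ∀ r : ℝ, 0 ≤ r → ∀ x ∈ C, r • x ∈ C)
    (hC_pointed : ∀ x ∈ C, -x ∈ C → x = 0)
    (hf_pos : ∀ x ∈ C, x ≠ 0 → 0 < f x)
    (hnorm : ∀ x : X, ‖x‖ = sInf {r : ℝ | ∃ y ∈ C, ∃ z ∈ C, x = y - z ∧ r = f y + f z})
    (hstrong : ∀ x : X, ∃ y ∈ C, ∃ z ∈ C, x = y - z ∧ ‖x‖ = f y + f z)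
    (T P : X →L[ℝ] X)
    (hT_pos : ∀ x ∈ C, T x ∈ C) (hT_f : ∀ x, f (T x) = f x)
    (hP_pos : ∀ x ∈ C, P x ∈ C) (hP_f : ∀ x, f (P x) = f x)
    (hP_proj : P.comp P = P) :
    dobrushinCoeff P T =
      (1 / 2) * sSup {r : ℝ | ∃ u ∈ C, f u = 1 ∧
        ∃ v ∈ C, f v = 1 ∧ P (u - v) = 0 ∧ r = ‖T u - T v‖} := by
  classical
  have hf_nonneg : ∀ x ∈ C, 0 ≤ f x := by
    intro x hx
    rcases eq_or_ne x 0 with rfl | h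
    · simp
    · exact (hf_pos x hx h).le
  have hnle : ∀ y ∈ C, ∀ z ∈ C, ‖y - z‖ ≤ f y + f z := by
    intro y hy z hz
    rw [hnorm (y - z)]
    apply csInf_le
    · refine ⟨0, ?_⟩
      rintro r ⟨a, ha, b, hb, -, rfl⟩
      exact add_nonneg (hf_nonneg a ha) (hf_nonneg b hb)
    · exact ⟨y, hy, z, hz, rfl, rfl⟩
  set A := {r : ℝ | ∃ x : X, P x = 0 ∧ ‖x‖ ≤ 1 ∧ r = ‖T x‖} with hA
  set B := {r : ℝ | ∃ u ∈ C, f u = 1 ∧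
      ∃ v ∈ C, f v = 1 ∧ P (u - v) = 0 ∧ r = ‖T u - T v‖} with hB
  have hA0 : (0:ℝ) ∈ A := ⟨0, by simp, by simp, by simp⟩
  have hAbdd : BddAbove A := by
    refine ⟨‖T‖, ?_⟩
    rintro r ⟨x, -, hx, rfl⟩
    calc ‖T x‖ ≤ ‖T‖ * ‖x‖ := T.le_opNorm x
      _ ≤ ‖T‖ * 1 := by
          exact mul_le_mul_of_nonneg_left hx (norm_nonneg _)
      _ = ‖T‖ := mul_one _
  have hBbdd : BddAbove B := by
    refine ⟨‖T‖ * 2, ?_⟩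
    rintro r ⟨u, hu, hfu, v, hv, hfv, -, rfl⟩
    calc ‖T u - T v‖ = ‖T (u - v)‖ := by rw [map_sub]
      _ ≤ ‖T‖ * ‖u - v‖ := T.le_opNorm _
      _ ≤ ‖T‖ * 2 := by
          have := hnle u hu v hv
          have h2 : ‖u - v‖ ≤ 2 := by rw [hfu, hfv] at this; linarith
          exact mul_le_mul_of_nonneg_left h2 (norm_nonneg _)
  have hBnonneg : 0 ≤ sSup B := by
    rcases B.eq_empty_or_nonempty with he | ⟨b, hb⟩
    · rw [he, Real.sSup_empty]
    · have hb0 : 0 ≤ b := by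
        obtain ⟨u, -, -, v, -, -, -, rfl⟩ := hb
        exact norm_nonneg _
      exact hb0.trans (le_csSup hBbdd hb)
  have hAnonneg : 0 ≤ sSup A := le_csSup hAbdd hA0
  -- sSup B ≤ 2 * sSup A
  have h1 : sSup B ≤ 2 * sSup A := by
    rcases B.eq_empty_or_nonempty with he | hne
    · rw [he, Real.sSup_empty]; linarith
    · refine csSup_le hne ?_
      rintro r ⟨u, hu, hfu, v, hv, hfv, hPuv, rfl⟩
      have hx : ((1:ℝ)/2) • (u - v) ∈ {y : X | P y = 0 ∧ ‖y‖ ≤ 1 ∧ True} := by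
        constructor
        · rw [map_smul, hPuv, smul_zero]
        constructor
        · rw [norm_smul]
          have := hnle u hu v hv
          rw [hfu, hfv] at this
          have hnh : ‖(1:ℝ)/2‖ = 1/2 := by norm_num
          calc ‖(1:ℝ)/2‖ * ‖u - v‖ = (1/2) * ‖u - v‖ := by rw [hnh]
            _ ≤ (1/2) * 2 := by nlinarith
            _ = 1 := by norm_num
        · trivial
      obtain ⟨hP1, hn1, -⟩ := hx
      have hmemA : (1/2) * ‖T u - T v‖ ∈ A := by
        refine ⟨((1:ℝ)/2) • (u - v), hP1, hn1, ?_⟩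
        rw [map_smul, norm_smul, map_sub]
        norm_num
      have := le_csSup hAbdd hmemA
      linarith
  -- sSup A ≤ (1/2) * sSup B
  have h2 : sSup A ≤ (1/2) * sSup B := by
    refine csSup_le ⟨0, hA0⟩ ?_
    rintro a ⟨x, hPx, hx1, rfl⟩
    obtain ⟨y, hy, z, hz, hxyz, hnx⟩ := hstrong x
    have hfx : f x = 0 := by rw [← hP_f x, hPx, map_zero]
    have hfyz : f y = f z := by
      have : f x = f y - f z := by rw [hxyz, map_sub]
      rw [hfx] at this; linarith
    set t := f y with ht
    have h2t : 2 * t = ‖x‖ := by rw [hnx, ← hfyz]; ring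
    have ht0 : 0 ≤ t := hf_nonneg y hy
    rcases eq_or_lt_of_le ht0 with hteq | htpos
    · have hx0 : x = 0 := by
        have : ‖x‖ = 0 := by linarith
        exact norm_eq_zero.mp this
      rw [hx0, map_zero, norm_zero]
      positivity
    · have hti : (0:ℝ) < t⁻¹ := inv_pos.mpr htpos
      have hu : t⁻¹ • y ∈ C := hC_smul _ hti.le y hy
      have hv : t⁻¹ • z ∈ C := hC_smul _ hti.le z hz
      have hfu : f (t⁻¹ • y) = 1 := by
        rw [map_smul, smul_eq_mul, ← ht]; exact inv_mul_cancel₀ htpos.ne'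
      have hfv : f (t⁻¹ • z) = 1 := by
        rw [map_smul, ← hfyz, smul_eq_mul]; exact inv_mul_cancel₀ htpos.ne'
      have huv : t⁻¹ • y - t⁻¹ • z = t⁻¹ • x := by
        rw [hxyz, smul_sub]
      have hPuv : P (t⁻¹ • y - t⁻¹ • z) = 0 := by
        rw [huv, map_smul, hPx, smul_zero]
      have hmemB : t⁻¹ * ‖T x‖ ∈ B := by
        refine ⟨t⁻¹ • y, hu, hfu, t⁻¹ • z, hv, hfv, hPuv, ?_⟩
        rw [← map_sub, huv, map_smul, norm_smul, Real.norm_eq_abs, abs_of_pos hti]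
      have hle : t⁻¹ * ‖T x‖ ≤ sSup B := le_csSup hBbdd hmemB
      have ht12 : t ≤ 1/2 := by linarith
      calc ‖T x‖ = t * (t⁻¹ * ‖T x‖) := by field_simp
        _ ≤ t * sSup B := mul_le_mul_of_nonneg_left hle ht0
        _ ≤ (1/2) * sSup B := mul_le_mul_of_nonneg_right ht12 hBnonneg
  show sSup A = (1/2) * sSup B
  linarith
end
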